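/- Every chordal graph with independence number at most 3 is a circular-arc graph. -/

import Mathlib

open SimpleGraph

variable {V : Type*}

/-- A graph is chordal if it has no induced cycle of length at least four. -/
def Chordal (G : SimpleGraph V) : Prop :=
  ∀ n : ℕ, 4 ≤ n → IsEmpty (SimpleGraph.cycleGraph n ↪g G)

/-- The independence number of `G` is at most `k`. -/
def IndepNumLE (G : SimpleGraph V) (k : ℕ) : Prop :=
  ∀ s : Finset V, (∀ a ∈ s, ∀ b ∈ s, a ≠ b → ¬ G.Adj a b) → s.card ≤ k

/-- The circular arc on the circle `ℝ / ℤ` obtained as the image of the real interval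
`[a, b]` under the quotient map. -/
def arcSet (a b : ℝ) : Set (AddCircle (1 : ℝ)) :=
  (fun t : ℝ => (t : AddCircle (1 : ℝ))) '' Set.Icc a b

/-- `G` is a circular-arc graph: the intersection graph of a family of arcs of a circle. -/
def IsCircularArcGraph (G : SimpleGraph V) : Prop :=
  ∃ s e : V → ℝ, ∀ u v : V, u ≠ v →
    (G.Adj u v ↔ (arcSet (s u) (e u) ∩ arcSet (s v) (e v)).Nonempty)

set_option linter.unusedVariables false

namespace CAAux

lemma fin_sub_val_eq_one {n : ℕ} (hn : 2 ≤ n) (u v : Fin n) :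
    ((u - v).val = 1) ↔ (u.val = v.val + 1 ∨ (u.val = 0 ∧ v.val + 1 = n)) := by
  rcases le_or_gt v u with h | h
  · have h1 := Fin.sub_val_of_le h
    have h2 := u.isLt
    have h3 := v.isLt
    have h4 : v.val ≤ u.val := h
    omega
  · have h1 := (Fin.coe_sub_iff_lt (a := u) (b := v)).mpr h
    have h2 := u.isLt
    have h3 := v.isLt
    have h4 : u.val < v.val := h
    omega

lemma cycle_adj_iff {n : ℕ} (hn : 2 ≤ n) (u v : Fin n) :
    (cycleGraph n).Adj u v ↔
      (u.val = v.val + 1 ∨ (u.val = 0 ∧ v.val + 1 = n)) ∨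
      (v.val = u.val + 1 ∨ (v.val = 0 ∧ u.val + 1 = n)) := by
  rw [SimpleGraph.cycleGraph_adj']
  rw [fin_sub_val_eq_one hn, fin_sub_val_eq_one hn]

/-- Workhorse: glue two induced paths (given as functions) into an induced cycle,
contradicting chordality. `P` runs from `x` to `y` (length `p`), `Q` from `y` to `x`
(length `q`). -/
lemma cycle_glue {G : SimpleGraph V} (hG : Chordal G) {x y : V} {p q : ℕ}
    (hp : 2 ≤ p) (hq : 2 ≤ q) (P Q : ℕ → V)
    (hP0 : P 0 = x) (hPp : P p = y) (hQ0 : Q 0 = y) (hQq : Q q = x)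
    (hPadj : ∀ i, i < p → G.Adj (P i) (P (i + 1)))
    (hQadj : ∀ i, i < q → G.Adj (Q i) (Q (i + 1)))
    (hPind : ∀ i j, i + 1 < j → j ≤ p → ¬ G.Adj (P i) (P j))
    (hQind : ∀ i j, i + 1 < j → j ≤ q → ¬ G.Adj (Q i) (Q j))
    (hPinj : ∀ i j, i < j → j ≤ p → P i ≠ P j)
    (hQinj : ∀ i j, i < j → j ≤ q → Q i ≠ Q j)
    (hcross : ∀ i j, 0 < i → i < p → 0 < j → j < q →
      ¬ G.Adj (P i) (Q j) ∧ P i ≠ Q j) : False := by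
  set n := p + q with hn
  have hn4 : 4 ≤ n := by omega
  have hn2 : 2 ≤ n := by omega
  -- the map
  set f : Fin n → V := fun i => if (i : ℕ) < p then P i else Q ((i : ℕ) - p) with hf
  -- values as P/Q entries
  have hfval : ∀ i : Fin n, ((i : ℕ) < p ∧ f i = P i) ∨
      (p ≤ (i : ℕ) ∧ (i : ℕ) - p < q ∧ f i = Q ((i : ℕ) - p)) := by
    intro i
    by_cases h : (i : ℕ) < p
    · exact Or.inl ⟨h, by simp [hf, h]⟩
    · have := i.isLt
      exact Or.inr ⟨by omega, by omega, by simp [hf, h]⟩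
  -- distinctness of f i, f j for i < j (as naturals)
  have hne : ∀ i j : Fin n, (i : ℕ) < (j : ℕ) → f i ≠ f j := by
    intro i j hij
    have hi := i.isLt
    have hj := j.isLt
    rcases hfval i with ⟨h1, e1⟩ | ⟨h1, h1', e1⟩ <;>
      rcases hfval j with ⟨h2, e2⟩ | ⟨h2, h2', e2⟩ <;> rw [e1, e2]
    · exact hPinj _ _ hij (by omega)
    · -- i in P part, j in Q part
      by_cases hi0 : (i : ℕ) = 0
      · -- f i = x = Q q
        rw [hi0, hP0, ← hQq]
        exact fun h => (hQinj _ _ (by omega) le_rfl) h.symm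
      · by_cases hjp : (j : ℕ) = p
        · rw [show (j:ℕ) - p = 0 by omega, hQ0, ← hPp]
          exact hPinj _ _ h1 le_rfl
        · exact (hcross _ _ (by omega) h1 (by omega) (by omega)).2
    · omega
    · exact hQinj _ _ (by omega) (by omega)
  have hinj : Function.Injective f := by
    intro i j h
    by_contra hne'
    rcases lt_or_gt_of_ne (fun hv : (i:ℕ) = (j:ℕ) => hne' (Fin.ext hv)) with hlt | hlt
    · exact hne i j hlt h
    · exact hne j i hlt h.symm
  -- forward adjacency: consecutive (cyclically) implies adjacent
  have hconsec : ∀ i j : Fin n, ((j : ℕ) = (i : ℕ) + 1) → G.Adj (f i) (f j) := by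
    intro i j hij
    have hi := i.isLt
    have hj := j.isLt
    rcases hfval i with ⟨h1, e1⟩ | ⟨h1, h1', e1⟩ <;>
      rcases hfval j with ⟨h2, e2⟩ | ⟨h2, h2', e2⟩ <;> rw [e1, e2]
    · rw [hij]; exact hPadj _ (by omega)
    · -- j = p exactly
      have hip : (i : ℕ) + 1 = p := by omega
      rw [show (j:ℕ) - p = 0 by omega, hQ0, ← hPp, ← hip]
      exact hPadj _ (by omega)
    · omega
    · rw [hij, show (i:ℕ) + 1 - p = ((i:ℕ) - p) + 1 by omega]
      exact hQadj _ (by omega)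
  have hwrap : ∀ i j : Fin n, (i : ℕ) = n - 1 → (j : ℕ) = 0 → G.Adj (f i) (f j) := by
    intro i j hi1 hj0
    rcases hfval i with ⟨h1, e1⟩ | ⟨h1, h1', e1⟩
    · omega
    · rcases hfval j with ⟨h2, e2⟩ | ⟨h2, h2', e2⟩
      · rw [e1, e2, hj0, hP0, ← hQq, show (i:ℕ) - p = q - 1 by omega]
        have h := hQadj (q - 1) (by omega)
        rw [show q - 1 + 1 = q by omega] at h
        exact h
      · omega
  -- converse: adjacency implies consecutive
  have hnonadj : ∀ i j : Fin n, (i : ℕ) < (j : ℕ) → (j : ℕ) ≠ (i : ℕ) + 1 →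
      ¬ ((i : ℕ) = 0 ∧ (j : ℕ) = n - 1) → ¬ G.Adj (f i) (f j) := by
    intro i j hij hsucc hwrap'
    have hi := i.isLt
    have hj := j.isLt
    rcases hfval i with ⟨h1, e1⟩ | ⟨h1, h1', e1⟩ <;>
      rcases hfval j with ⟨h2, e2⟩ | ⟨h2, h2', e2⟩ <;> rw [e1, e2]
    · exact hPind _ _ (by omega) (by omega)
    · by_cases hi0 : (i : ℕ) = 0
      · -- f i = x = Q q ; j in Q-part, j - p < q, and j ≠ n - 1 so j - p + 1 < q
        rw [hi0, hP0, ← hQq]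
        intro hadj
        exact hQind _ _ (by omega) le_rfl hadj.symm
      · by_cases hjp : (j : ℕ) = p
        · rw [show (j:ℕ) - p = 0 by omega, hQ0, ← hPp]
          exact hPind _ _ (by omega) le_rfl
        · exact (hcross _ _ (by omega) h1 (by omega) (by omega)).1
    · omega
    · exact hQind _ _ (by omega) (by omega)
  -- build the embedding
  have hiff : ∀ i j : Fin n, G.Adj (f i) (f j) ↔ (cycleGraph n).Adj i j := by
    intro i j
    rw [cycle_adj_iff hn2]
    constructor
    · intro hadj
      by_contra hc
      rcases lt_trichotomy (i : ℕ) (j : ℕ) with hlt | heq | hlt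
      · exact hnonadj i j hlt (by omega) (by omega) hadj
      · exact G.loopless.irrefl _ (by rwa [show i = j from Fin.ext heq] at hadj)
      · exact hnonadj j i hlt (by omega) (by omega) hadj.symm
    · intro hadj
      rcases hadj with (h | ⟨h1, h2⟩) | (h | ⟨h1, h2⟩)
      · exact (hconsec j i h).symm
      · exact (hwrap j i (by omega) (by omega)).symm
      · exact hconsec i j h
      · exact hwrap i j (by omega) (by omega)
  exact (hG n hn4).elim ⟨⟨f, hinj⟩, fun {i j} => hiff i j⟩

/-- Restriction of a graph to a set of vertices (keeping the ambient vertex type). -/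
def res (G : SimpleGraph V) (S : Set V) : SimpleGraph V where
  Adj u v := G.Adj u v ∧ u ∈ S ∧ v ∈ S
  symm := ⟨fun u v ⟨h, h1, h2⟩ => ⟨h.symm, h2, h1⟩⟩
  loopless := ⟨fun u h => G.loopless.irrefl u h.1⟩

lemma reach_mem {G : SimpleGraph V} {S : Set V} :
    ∀ {u v : V}, (res G S).Walk u v → u ∈ S → v ∈ S := by
  intro u v w
  induction w with
  | nil => exact id
  | cons h _ ih => exact fun _ => ih h.2.2

lemma walk_transfer {H K : SimpleGraph V} {C : Set V}
    (hC : ∀ ⦃u v⦄, H.Adj u v → u ∈ C → v ∈ C)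
    (hK : ∀ ⦃u v⦄, H.Adj u v → u ∈ C → v ∈ C → K.Adj u v) :
    ∀ {u v : V}, H.Walk u v → u ∈ C → K.Reachable u v := by
  intro u v w
  induction w with
  | nil => exact fun _ => Reachable.refl _
  | cons h q ih =>
    intro hu
    have hv := hC h hu
    exact ((hK h hu hv).reachable).trans (ih hv)

lemma exists_prefix_walk {G : SimpleGraph V} {u v : V} (p : G.Walk u v) (i : ℕ) :
    ∃ w : G.Walk u (p.getVert i), w.length ≤ i := by
  induction p generalizing i with
  | nil =>
    refine ⟨Walk.nil.copy rfl ?_, by simp⟩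
    exact (Walk.getVert_of_length_le _ (by simp)).symm
  | @cons a b c h q ih =>
    match i with
    | 0 => exact ⟨Walk.nil.copy rfl (Walk.getVert_zero _).symm, by simp⟩
    | (i + 1) =>
      obtain ⟨w, hw⟩ := ih i
      refine ⟨(w.cons h).copy rfl (Walk.getVert_cons_succ _ _).symm, ?_⟩
      simp only [Walk.length_copy, Walk.length_cons]
      omega

lemma exists_suffix_walk {G : SimpleGraph V} {u v : V} (p : G.Walk u v) (i : ℕ) :
    ∃ w : G.Walk (p.getVert i) v, w.length ≤ p.length - i := by
  induction p generalizing i with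
  | nil =>
    exact ⟨Walk.nil.copy (Walk.getVert_of_length_le _ (by simp)).symm rfl, by simp⟩
  | @cons a b c h q ih =>
    match i with
    | 0 =>
      refine ⟨(q.cons h).copy (Walk.getVert_zero _).symm rfl, ?_⟩
      simp
    | (i + 1) =>
      obtain ⟨w, hw⟩ := ih i
      refine ⟨w.copy (Walk.getVert_cons_succ _ _).symm rfl, ?_⟩
      simp only [Walk.length_copy, Walk.length_cons]
      omega

lemma shortest_inj {K : SimpleGraph V} {x y : V} (p : K.Walk x y)
    (hlen : p.length = K.dist x y) :
    ∀ i j, i < j → j ≤ p.length → p.getVert i ≠ p.getVert j := by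
  intro i j hij hj heq
  obtain ⟨w1, hw1⟩ := exists_prefix_walk p i
  obtain ⟨w2, hw2⟩ := exists_suffix_walk p j
  have hd := SimpleGraph.dist_le (w1.append (w2.copy heq.symm rfl))
  rw [Walk.length_append, Walk.length_copy] at hd
  omega

lemma shortest_ind {K : SimpleGraph V} {x y : V} (p : K.Walk x y)
    (hlen : p.length = K.dist x y) :
    ∀ i j, i + 1 < j → j ≤ p.length → ¬ K.Adj (p.getVert i) (p.getVert j) := by
  intro i j hij hj hadj
  obtain ⟨w1, hw1⟩ := exists_prefix_walk p i
  obtain ⟨w2, hw2⟩ := exists_suffix_walk p j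
  have hd := SimpleGraph.dist_le (w1.append (Walk.cons hadj w2))
  rw [Walk.length_append, Walk.length_cons] at hd
  omega

lemma exists_nbr {G : SimpleGraph V} {S S' : Set V} {x y z : V} (hxS : x ∈ S)
    (hS' : ∀ v ∈ S', v = z ∨ v ∈ S) (w : (res G S').Walk x y)
    (hy : ¬ (res G S).Reachable x y) :
    ∃ u, (res G S).Reachable x u ∧ G.Adj u z := by
  classical
  set P : ℕ → Prop := fun i => (res G S).Reachable x (w.getVert i) with hP
  have hP0 : P 0 := by
    rw [hP]; simp only [Walk.getVert_zero]; exact Reachable.refl x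
  set i0 := Nat.findGreatest P w.length with hi0
  have hi0P : P i0 := Nat.findGreatest_spec (Nat.zero_le _) hP0
  have hi0le : i0 ≤ w.length := Nat.findGreatest_le _
  have hi0lt : i0 < w.length := by
    rcases lt_or_eq_of_le hi0le with h | h
    · exact h
    · exfalso; apply hy; rw [hP] at hi0P; rwa [h, Walk.getVert_length] at hi0P
  have hnot : ¬ P (i0 + 1) :=
    Nat.findGreatest_is_greatest (Nat.lt_succ_self i0) (by omega)
  have hadj := w.adj_getVert_succ hi0lt
  rcases hS' _ hadj.2.2 with hz | hmem
  · exact ⟨w.getVert i0, hi0P, hz ▸ hadj.1⟩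
  · exfalso
    apply hnot
    have hcur : w.getVert i0 ∈ S := reach_mem (Classical.choice hi0P) hxS
    exact hi0P.trans (SimpleGraph.Adj.reachable ⟨hadj.1, hcur, hmem⟩)


/-- `v` is simplicial within the vertex set `A`. -/
def SimpA (G : SimpleGraph V) (A : Set V) (v : V) : Prop :=
  v ∈ A ∧ ∀ a b, a ∈ A → b ∈ A → G.Adj v a → G.Adj v b → a ≠ b → G.Adj a b

theorem dirac_main [Fintype V] {G : SimpleGraph V} (hG : Chordal G) :
    ∀ (N : ℕ) (A : Finset V), A.card ≤ N →
      ((A.Nonempty → ∃ v, SimpA G ↑A v) ∧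
       (∀ x y, x ∈ A → y ∈ A → x ≠ y → ¬G.Adj x y →
         ∃ v w, SimpA G ↑A v ∧ SimpA G ↑A w ∧ v ≠ w ∧ ¬G.Adj v w)) := by
  intro N
  induction N with
  | zero =>
    intro A hA
    have hAe : A = ∅ := Finset.card_eq_zero.mp (le_antisymm hA (Nat.zero_le _))
    subst hAe
    constructor
    · rintro ⟨a, ha⟩; exact absurd ha (Finset.notMem_empty a)
    · intro x y hx; exact absurd hx (Finset.notMem_empty x)
  | succ N ih =>
    intro A hA
    classical
    have key : ∀ x y, x ∈ A → y ∈ A → x ≠ y → ¬G.Adj x y →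
        ∃ v w, SimpA G ↑A v ∧ SimpA G ↑A w ∧ v ≠ w ∧ ¬G.Adj v w := by
      intro x y hxA hyA hxy hnadj
      -- separators exist
      set Sep : Finset V → Prop := fun X => X ⊆ A ∧ x ∉ X ∧ y ∉ X ∧
        ¬ (res G {v | v ∈ A ∧ v ∉ X}).Reachable x y with hSepdef
      have hsep0 : Sep ((A.erase x).erase y) := by
        refine ⟨(Finset.erase_subset _ _).trans (Finset.erase_subset _ _),
          fun h => (Finset.ne_of_mem_erase (Finset.mem_of_mem_erase h)) rfl,
          fun h => (Finset.ne_of_mem_erase h) rfl, ?_⟩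
        rintro ⟨w⟩
        cases w with
        | nil => exact hxy rfl
        | @cons _ b _ hadj q =>
          obtain ⟨hG1, _, hb⟩ := hadj
          rcases eq_or_ne b y with rfl | hby
          · exact hnadj hG1
          · rcases eq_or_ne b x with rfl | hbx
            · exact G.loopless.irrefl _ hG1
            · exact hb.2 (Finset.mem_erase.mpr ⟨hby, Finset.mem_erase.mpr ⟨hbx, hb.1⟩⟩)
      have hex : ∃ n, ∃ X, Sep X ∧ X.card = n := ⟨_, _, hsep0, rfl⟩
      obtain ⟨X, hXSep, hXcard⟩ := Nat.find_spec hex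
      have hXmin : ∀ X', Sep X' → X.card ≤ X'.card := by
        intro X' hX'
        rw [hXcard]; exact Nat.find_min' hex ⟨X', hX', rfl⟩
      obtain ⟨hXsub, hxX, hyX, hXsep⟩ := hXSep
      set S : Set V := {v | v ∈ A ∧ v ∉ X} with hSdef
      set H := res G S with hHdef
      set Cx : Set V := {v | H.Reachable x v} with hCxdef
      set Cy : Set V := {v | H.Reachable y v} with hCydef
      have hxS : x ∈ S := ⟨hxA, hxX⟩
      have hyS : y ∈ S := ⟨hyA, hyX⟩
      have hxCx : x ∈ Cx := Reachable.refl x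
      have hyCy : y ∈ Cy := Reachable.refl y
      have memSx : ∀ v, v ∈ Cx → v ∈ S := fun v hv => reach_mem (Classical.choice hv) hxS
      have memSy : ∀ v, v ∈ Cy → v ∈ S := fun v hv => reach_mem (Classical.choice hv) hyS
      have disj : ∀ v, v ∈ Cx → v ∈ Cy → False := fun v h1 h2 => hXsep (h1.trans h2.symm)
      have closedCx : ∀ ⦃u v⦄, H.Adj u v → u ∈ Cx → v ∈ Cx :=
        fun u v ha hu => hu.trans ha.reachable
      have closedCy : ∀ ⦃u v⦄, H.Adj u v → u ∈ Cy → v ∈ Cy :=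
        fun u v ha hu => hu.trans ha.reachable
      have cross : ∀ u, u ∈ Cx → ∀ w, w ∈ Cy → ¬ G.Adj u w ∧ u ≠ w := by
        intro u hu w hw
        constructor
        · intro hadj; exact disj w (closedCx ⟨hadj, memSx u hu, memSy w hw⟩ hu) hw
        · rintro rfl; exact disj u hu hw
      have hS'prop : ∀ z : V, ∀ v ∈ ({v | v ∈ A ∧ v ∉ X.erase z} : Set V), v = z ∨ v ∈ S := by
        intro z v hv
        by_cases hvX : v ∈ X
        · left
          by_contra hvz
          exact hv.2 (Finset.mem_erase.mpr ⟨hvz, hvX⟩)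
        · exact Or.inr ⟨hv.1, hvX⟩
      have hreachz : ∀ z ∈ X, (res G {v | v ∈ A ∧ v ∉ X.erase z}).Reachable x y := by
        intro z hz
        by_contra hc
        have hcard := hXmin (X.erase z) ⟨(Finset.erase_subset _ _).trans hXsub,
          fun h => hxX (Finset.mem_of_mem_erase h),
          fun h => hyX (Finset.mem_of_mem_erase h), hc⟩
        have := Finset.card_erase_of_mem hz
        have hpos : 0 < X.card := Finset.card_pos.mpr ⟨z, hz⟩
        omega
      have nbrx : ∀ z ∈ X, ∃ u, u ∈ Cx ∧ G.Adj u z := by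
        intro z hz
        obtain ⟨w⟩ := hreachz z hz
        obtain ⟨u, h1, h2⟩ := exists_nbr hxS (hS'prop z) w hXsep
        exact ⟨u, h1, h2⟩
      have nbry : ∀ z ∈ X, ∃ u, u ∈ Cy ∧ G.Adj u z := by
        intro z hz
        obtain ⟨w⟩ := (hreachz z hz).symm
        obtain ⟨u, h1, h2⟩ := exists_nbr hyS (hS'prop z) w (fun h => hXsep h.symm)
        exact ⟨u, h1, h2⟩
      -- X is a clique
      have hXclique : ∀ z ∈ X, ∀ z' ∈ X, z ≠ z' → G.Adj z z' := by
        intro z hz z' hz' hne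
        by_contra hnadjzz
        obtain ⟨ux, huxC, huxz⟩ := nbrx z hz
        obtain ⟨ux', hux'C, hux'z'⟩ := nbrx z' hz'
        obtain ⟨uy, huyC, huyz⟩ := nbry z hz
        obtain ⟨uy', huy'C, huy'z'⟩ := nbry z' hz'
        set Sx : Set V := Cx ∪ {z, z'} with hSxdef
        set Sy : Set V := Cy ∪ {z, z'} with hSydef
        have hzSx : z ∈ Sx := Or.inr (Set.mem_insert _ _)
        have hz'Sx : z' ∈ Sx := Or.inr (Set.mem_insert_of_mem _ rfl)
        have hzSy : z ∈ Sy := Or.inr (Set.mem_insert _ _)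
        have hz'Sy : z' ∈ Sy := Or.inr (Set.mem_insert_of_mem _ rfl)
        set Kx := res G Sx with hKxdef
        set Ky := res G Sy with hKydef
        have hrx : Kx.Reachable z z' := by
          have h1 : Kx.Reachable ux ux' :=
            walk_transfer closedCx
              (fun a b h ha hb => (⟨h.1, Or.inl ha, Or.inl hb⟩ : Kx.Adj a b))
              (Classical.choice (huxC.symm.trans hux'C)) huxC
          exact (((show Kx.Adj z ux from ⟨huxz.symm, hzSx, Or.inl huxC⟩).reachable).trans
            h1).trans (show Kx.Adj ux' z' from ⟨hux'z', Or.inl hux'C, hz'Sx⟩).reachable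
        have hry : Ky.Reachable z' z := by
          have h1 : Ky.Reachable uy' uy :=
            walk_transfer closedCy
              (fun a b h ha hb => (⟨h.1, Or.inl ha, Or.inl hb⟩ : Ky.Adj a b))
              (Classical.choice (huy'C.symm.trans huyC)) huy'C
          exact (((show Ky.Adj z' uy' from ⟨huy'z'.symm, hz'Sy, Or.inl huy'C⟩).reachable).trans
            h1).trans (show Ky.Adj uy z from ⟨huyz, Or.inl huyC, hzSy⟩).reachable
        obtain ⟨p, hpP, hplen⟩ := hrx.exists_path_of_dist
        obtain ⟨q, hqP, hqlen⟩ := hry.exists_path_of_dist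
        have hlen2 : ∀ {a b : V} (K : SimpleGraph V) (w : K.Walk a b), a ≠ b →
            ¬ G.Adj a b → (∀ ⦃u v⦄, K.Adj u v → G.Adj u v) → 2 ≤ w.length := by
          intro a b K w hab hnab hKG
          by_contra hlt
          push_neg at hlt
          interval_cases h : w.length
          · exact hab (by
              have h1 := w.getVert_zero
              have h2 := w.getVert_length
              rw [h] at h2
              rw [← h1, h2])
          · refine hnab (hKG ?_)
            have h1 := w.adj_getVert_succ (by omega : 0 < w.length)
            rwa [w.getVert_zero, show (0 + 1 : ℕ) = w.length by omega,
              w.getVert_length] at h1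
        have hp2 : 2 ≤ p.length := hlen2 Kx p hne hnadjzz (fun u v h => h.1)
        have hq2 : 2 ≤ q.length := hlen2 Ky q (Ne.symm hne) (fun h => hnadjzz h.symm)
          (fun u v h => h.1)
        have memP : ∀ i, i ≤ p.length → p.getVert i ∈ Sx := by
          intro i hi
          rcases eq_or_lt_of_le hi with rfl | hlt
          · rw [Walk.getVert_length]; exact hz'Sx
          · exact (p.adj_getVert_succ hlt).2.1
        have memQ : ∀ i, i ≤ q.length → q.getVert i ∈ Sy := by
          intro i hi
          rcases eq_or_lt_of_le hi with rfl | hlt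
          · rw [Walk.getVert_length]; exact hzSy
          · exact (q.adj_getVert_succ hlt).2.1
        have hinjP := shortest_inj p hplen
        have hindP := shortest_ind p hplen
        have hinjQ := shortest_inj q hqlen
        have hindQ := shortest_ind q hqlen
        have intCx : ∀ i, 0 < i → i < p.length → p.getVert i ∈ Cx := by
          intro i h0 hlt
          rcases memP i (le_of_lt hlt) with h | h
          · exact h
          · rcases h with h | h
            · exact absurd (p.getVert_zero.trans h.symm)
                (hinjP 0 i h0 (le_of_lt hlt))
            · exact absurd (h.trans p.getVert_length.symm)
                (fun hh => hinjP i p.length hlt le_rfl hh)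
        have intCy : ∀ i, 0 < i → i < q.length → q.getVert i ∈ Cy := by
          intro i h0 hlt
          rcases memQ i (le_of_lt hlt) with h | h
          · exact h
          · rcases h with h | h
            · exact absurd (h.trans q.getVert_length.symm)
                (fun hh => hinjQ i q.length hlt le_rfl hh)
            · exact absurd (q.getVert_zero.trans h.symm)
                (hinjQ 0 i h0 (le_of_lt hlt))
        refine cycle_glue hG hp2 hq2 (fun i => p.getVert i) (fun i => q.getVert i)
          p.getVert_zero p.getVert_length q.getVert_zero q.getVert_length
          (fun i hi => (p.adj_getVert_succ hi).1)
          (fun i hi => (q.adj_getVert_succ hi).1)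
          (fun i j h1 h2 hadj => hindP i j h1 h2 ⟨hadj, memP i (by omega), memP j h2⟩)
          (fun i j h1 h2 hadj => hindQ i j h1 h2 ⟨hadj, memQ i (by omega), memQ j h2⟩)
          (fun i j h1 h2 => hinjP i j h1 h2)
          (fun i j h1 h2 => hinjQ i j h1 h2)
          (fun i j h1 h2 h3 h4 => cross _ (intCx i h1 h2) _ (intCy j h3 h4))
      -- one side: get a simplicial vertex of A inside the component
      have side : ∀ (x0 : V), x0 ∈ S → ∀ (C : Set V),
          (∀ v, v ∈ C ↔ H.Reachable x0 v) →
          ∀ (w0 : V), w0 ∈ A → w0 ∉ X → w0 ∉ C →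
          ∃ v0, v0 ∈ C ∧ SimpA G ↑A v0 := by
        intro x0 hx0S C hC w0 hw0A hw0X hw0C
        set Ax : Finset V := X ∪ A.filter (fun v => v ∈ C) with hAxdef
        have hmemAx : ∀ v, v ∈ Ax ↔ v ∈ X ∨ (v ∈ A ∧ v ∈ C) := by
          intro v
          simp [hAxdef, Finset.mem_union, Finset.mem_filter]
        have hsubA : Ax ⊆ A := by
          intro v hv
          rcases (hmemAx v).mp hv with h | h
          · exact hXsub h
          · exact h.1
        have hw0Ax : w0 ∉ Ax := by
          rw [hmemAx]
          rintro (h | h)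
          · exact hw0X h
          · exact hw0C h.2
        have hcard : Ax.card ≤ N := by
          have h1 : Ax.card < A.card :=
            Finset.card_lt_card ⟨hsubA, fun hAA => hw0Ax (hAA hw0A)⟩
          omega
        have hx0C : x0 ∈ C := (hC x0).mpr (Reachable.refl x0)
        have hclos : ∀ v0, v0 ∈ C → ∀ b, b ∈ A → G.Adj v0 b → b ∈ Ax := by
          intro v0 hv0 b hbA hadj
          by_cases hbX : b ∈ X
          · exact (hmemAx b).mpr (Or.inl hbX)
          · have hv0S : v0 ∈ S := reach_mem (Classical.choice ((hC v0).mp hv0)) hx0S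
            have hbC : b ∈ C := (hC b).mpr
              (((hC v0).mp hv0).trans (Adj.reachable ⟨hadj, hv0S, ⟨hbA, hbX⟩⟩))
            exact (hmemAx b).mpr (Or.inr ⟨hbA, hbC⟩)
        have hx0Ax : x0 ∈ Ax := (hmemAx x0).mpr (Or.inr ⟨hx0S.1, hx0C⟩)
        obtain ⟨v0, hv0Ax, hv0C, hv0simp⟩ : ∃ v0, v0 ∈ Ax ∧ v0 ∈ C ∧ SimpA G ↑Ax v0 := by
          by_cases hcl : ∀ a ∈ Ax, ∀ b ∈ Ax, a ≠ b → G.Adj a b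
          · exact ⟨x0, hx0Ax, hx0C, Finset.mem_coe.mpr hx0Ax,
              fun a b ha hb _ _ hneab => hcl a (Finset.mem_coe.mp ha) b (Finset.mem_coe.mp hb) hneab⟩
          · push_neg at hcl
            obtain ⟨a, haAx, b, hbAx, hneab, hnadjab⟩ := hcl
            obtain ⟨v, w, hv, hw, hvw, hnadjvw⟩ := (ih Ax hcard).2 a b haAx hbAx hneab hnadjab
            by_cases hvX : v ∈ X
            · have hwX : w ∉ X := fun h => hnadjvw (hXclique v hvX w h hvw)
              have hwAx : w ∈ Ax := Finset.mem_coe.mp hw.1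
              have hwC : w ∈ C := by
                rcases (hmemAx w).mp hwAx with h | h
                · exact absurd h hwX
                · exact h.2
              exact ⟨w, hwAx, hwC, hw⟩
            · have hvAx : v ∈ Ax := Finset.mem_coe.mp hv.1
              have hvC : v ∈ C := by
                rcases (hmemAx v).mp hvAx with h | h
                · exact absurd h hvX
                · exact h.2
              exact ⟨v, hvAx, hvC, hv⟩
        refine ⟨v0, hv0C, Finset.mem_coe.mpr (hsubA hv0Ax), ?_⟩
        intro a b haA hbA hva hvb hneab
        have haAx := hclos v0 hv0C a (Finset.mem_coe.mp haA) hva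
        have hbAx := hclos v0 hv0C b (Finset.mem_coe.mp hbA) hvb
        exact hv0simp.2 a b (Finset.mem_coe.mpr haAx) (Finset.mem_coe.mpr hbAx) hva hvb hneab
      obtain ⟨vx, hvxC, hvxS⟩ := side x hxS Cx (fun v => Iff.rfl) y hyA hyX
        (fun h => disj y h hyCy)
      obtain ⟨vy, hvyC, hvyS⟩ := side y hyS Cy (fun v => Iff.rfl) x hxA hxX
        (fun h => disj x hxCx h)
      have hcr := cross vx hvxC vy hvyC
      exact ⟨vx, vy, hvxS, hvyS, hcr.2, hcr.1⟩
    refine ⟨?_, key⟩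
    intro hAne
    by_cases hcl : ∀ a ∈ A, ∀ b ∈ A, a ≠ b → G.Adj a b
    · obtain ⟨a, ha⟩ := hAne
      exact ⟨a, Finset.mem_coe.mpr ha,
        fun a' b' ha' hb' _ _ hne => hcl a' (Finset.mem_coe.mp ha') b' (Finset.mem_coe.mp hb') hne⟩
    · push_neg at hcl
      obtain ⟨a, haA, b, hbA, hne, hnadj⟩ := hcl
      obtain ⟨v, w, hv, hw, _, _⟩ := key a b haA hbA hne hnadj
      exact ⟨v, hv⟩


/-- A finset is a clique. -/
def Cliq (G : SimpleGraph V) (A : Finset V) : Prop :=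
  ∀ a ∈ A, ∀ b ∈ A, a ≠ b → G.Adj a b

lemma cover3 [Fintype V] {G : SimpleGraph V} (hG : Chordal G) (hα : IndepNumLE G 3) :
    ∃ A B C : Finset V, Cliq G A ∧ Cliq G B ∧ Cliq G C ∧
      (∀ v, v ∈ A ∨ v ∈ B ∨ v ∈ C) ∧
      (∀ v ∈ B, v ∉ A) ∧ (∀ v ∈ C, v ∉ A) ∧ (∀ v ∈ C, v ∉ B) := by
  classical
  by_cases hV : Nonempty V
  swap
  · refine ⟨∅, ∅, ∅, ?_, ?_, ?_, ?_, ?_, ?_, ?_⟩ <;>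
      first
        | (intro v; exact absurd ⟨v⟩ hV)
        | (intro a ha; exact absurd ha (Finset.notMem_empty a))
  obtain ⟨v1, hv1⟩ := (dirac_main hG (Finset.univ.card) Finset.univ le_rfl).1
    (Finset.univ_nonempty)
  set A : Finset V := Finset.univ.filter (fun u => u = v1 ∨ G.Adj v1 u) with hAdef
  have hmemA : ∀ u, u ∈ A ↔ (u = v1 ∨ G.Adj v1 u) := by
    intro u; simp [hAdef]
  have hAcl : Cliq G A := by
    intro a ha b hb hab
    rcases (hmemA a).mp ha with rfl | ha' <;> rcases (hmemA b).mp hb with rfl | hb'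
    · exact absurd rfl hab
    · exact hb'
    · exact ha'.symm
    · exact hv1.2 a b (Finset.mem_coe.mpr (Finset.mem_univ a))
        (Finset.mem_coe.mpr (Finset.mem_univ b)) ha' hb' hab
  set R : Finset V := Finset.univ \ A with hRdef
  by_cases hR : R.Nonempty
  swap
  · refine ⟨A, ∅, ∅, hAcl, ?_, ?_, ?_, ?_, ?_, ?_⟩ <;>
      first
        | (intro a ha; exact absurd ha (Finset.notMem_empty a))
        | (intro v
           left
           by_contra hvA
           exact hR ⟨v, by simp [hRdef, hvA]⟩)
  obtain ⟨v2, hv2⟩ := (dirac_main hG R.card R le_rfl).1 hR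
  set B : Finset V := R.filter (fun u => u = v2 ∨ G.Adj v2 u) with hBdef
  have hmemB : ∀ u, u ∈ B ↔ (u ∈ R ∧ (u = v2 ∨ G.Adj v2 u)) := by
    intro u; simp [hBdef]
  have hv2R : v2 ∈ R := Finset.mem_coe.mp hv2.1
  have hBcl : Cliq G B := by
    intro a ha b hb hab
    obtain ⟨haR, ha'⟩ := (hmemB a).mp ha
    obtain ⟨hbR, hb'⟩ := (hmemB b).mp hb
    rcases ha' with rfl | ha' <;> rcases hb' with rfl | hb'
    · exact absurd rfl hab
    · exact hb'
    · exact ha'.symm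
    · exact hv2.2 a b (Finset.mem_coe.mpr haR) (Finset.mem_coe.mpr hbR) ha' hb' hab
  set C : Finset V := R \ B with hCdef
  have hmemC : ∀ u, u ∈ C ↔ (u ∈ R ∧ u ∉ B) := by
    intro u; simp [hCdef]
  have hnadjA : ∀ u ∈ R, ¬ G.Adj v1 u ∧ u ≠ v1 := by
    intro u hu
    have : u ∉ A := (Finset.mem_sdiff.mp hu).2
    rw [hmemA] at this
    push_neg at this
    exact ⟨this.2, this.1⟩
  have hnadjB : ∀ u ∈ C, ¬ G.Adj v2 u ∧ u ≠ v2 := by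
    intro u hu
    obtain ⟨huR, huB⟩ := (hmemC u).mp hu
    rw [hmemB] at huB
    push_neg at huB
    exact ⟨huB huR |>.2, huB huR |>.1⟩
  have hCcl : Cliq G C := by
    intro u hu w hw huw
    by_contra hnadj
    obtain ⟨huR, _⟩ := (hmemC u).mp hu
    obtain ⟨hwR, _⟩ := (hmemC w).mp hw
    have h1u := hnadjA u huR
    have h1w := hnadjA w hwR
    have h1v2 := hnadjA v2 hv2R
    have h2u := hnadjB u hu
    have h2w := hnadjB w hw
    -- independent 4-set
    set s4 : Finset V := {v1, v2, u, w} with hs4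
    have hcard : s4.card = 4 := by
      rw [hs4]
      rw [Finset.card_insert_of_notMem, Finset.card_insert_of_notMem,
        Finset.card_insert_of_notMem, Finset.card_singleton]
      · simp only [Finset.mem_singleton]; exact huw
      · simp only [Finset.mem_insert, Finset.mem_singleton]
        push_neg
        exact ⟨fun h => h2u.2 h.symm, fun h => h2w.2 h.symm⟩
      · simp only [Finset.mem_insert, Finset.mem_singleton]
        push_neg
        exact ⟨fun h => h1v2.2 h.symm, fun h => h1u.2 h.symm, fun h => h1w.2 h.symm⟩
    have hindep : ∀ a ∈ s4, ∀ b ∈ s4, a ≠ b → ¬ G.Adj a b := by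
      intro a ha b hb hab
      simp only [hs4, Finset.mem_insert, Finset.mem_singleton] at ha hb
      rcases ha with rfl | rfl | rfl | rfl <;> rcases hb with rfl | rfl | rfl | rfl <;>
        first
          | exact absurd rfl hab
          | exact h1v2.1
          | exact h1u.1
          | exact h1w.1
          | exact fun h => h1v2.1 h.symm
          | exact fun h => h1u.1 h.symm
          | exact fun h => h1w.1 h.symm
          | exact h2u.1
          | exact h2w.1
          | exact fun h => h2u.1 h.symm
          | exact fun h => h2w.1 h.symm
          | exact hnadj
          | exact fun h => hnadj h.symm
    have := hα s4 hindep
    omega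
  refine ⟨A, B, C, hAcl, hBcl, hCcl, ?_, ?_, ?_, ?_⟩
  · intro v
    by_cases hvA : v ∈ A
    · exact Or.inl hvA
    · have hvR : v ∈ R := by simp [hRdef, hvA]
      by_cases hvB : v ∈ B
      · exact Or.inr (Or.inl hvB)
      · exact Or.inr (Or.inr ((hmemC v).mpr ⟨hvR, hvB⟩))
  · intro v hv
    exact (Finset.mem_sdiff.mp ((hmemB v).mp hv).1).2
  · intro v hv
    exact (Finset.mem_sdiff.mp ((hmemC v).mp hv).1).2
  · intro v hv
    exact ((hmemC v).mp hv).2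


/-- no induced C4 -/
lemma no_c4 {G : SimpleGraph V} (hG : Chordal G) {a b b' a' : V}
    (h1 : G.Adj a b) (h2 : G.Adj b b') (h3 : G.Adj b' a') (h4 : G.Adj a' a)
    (h5 : ¬ G.Adj a b') (h6 : ¬ G.Adj b a') (h7 : a ≠ b') (h8 : b ≠ a') : False := by
  classical
  set P : ℕ → V := fun i => if i = 0 then a else if i = 1 then b else b' with hPdef
  set Q : ℕ → V := fun i => if i = 0 then b' else if i = 1 then a' else a with hQdef
  refine cycle_glue hG (p := 2) (q := 2) (by norm_num) (by norm_num) P Q rfl rfl rfl rfl ?_ ?_ ?_ ?_ ?_ ?_ ?_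
  · intro i hi
    interval_cases i <;> simp [hPdef, h1, h2]
  · intro i hi
    interval_cases i <;> simp [hQdef, h3, h4]
  · intro i j hij hj
    have : i = 0 ∧ j = 2 := by omega
    obtain ⟨rfl, rfl⟩ := this
    simpa [hPdef] using h5
  · intro i j hij hj
    have : i = 0 ∧ j = 2 := by omega
    obtain ⟨rfl, rfl⟩ := this
    simpa [hQdef] using (fun h => h5 h.symm)
  · intro i j hij hj
    interval_cases j <;> interval_cases i <;>
      simp [hPdef] <;>
        first | exact h1.ne | exact h2.ne | exact h7 | omega
  · intro i j hij hj
    interval_cases j <;> interval_cases i <;>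
      simp [hQdef] <;>
        first | exact h3.ne | exact h4.ne | exact fun h => h7 h.symm | omega
  · intro i j h1' h2' h3' h4'
    have : i = 1 ∧ j = 1 := by omega
    obtain ⟨rfl, rfl⟩ := this
    constructor
    · simpa [hPdef, hQdef] using h6
    · simpa [hPdef, hQdef] using h8

open Classical in
/-- neighbours of `a` inside `Q` -/
noncomputable def nbF (G : SimpleGraph V) (Q : Finset V) (a : V) : Finset V :=
  Q.filter (fun b => G.Adj a b)

noncomputable def rF (G : SimpleGraph V) (Q : Finset V) (a : V) : ℕ :=
  (nbF G Q a).card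

open Classical in
/-- threshold of `b` for the pair of cliques `(P, Q)`: the least `rF G Q a` over
`a ∈ P` adjacent to `b`, or `M` if there is none. -/
noncomputable def tF (G : SimpleGraph V) (P Q : Finset V) (M : ℕ) (b : V) : ℕ :=
  if h : (P.filter (fun a => G.Adj a b)).Nonempty then
    ((P.filter (fun a => G.Adj a b)).image (rF G Q)).min' (h.image _)
  else M

lemma mem_nbF {G : SimpleGraph V} {Q : Finset V} {a b : V} :
    b ∈ nbF G Q a ↔ b ∈ Q ∧ G.Adj a b := by
  classical
  simp [nbF]

/-- chain property of the bipartite adjacency between two cliques -/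
lemma chain {G : SimpleGraph V} (hG : Chordal G) {P Q : Finset V}
    (hP : Cliq G P) (hQ : Cliq G Q) (hPQ : ∀ v ∈ Q, v ∉ P) :
    ∀ a ∈ P, ∀ a' ∈ P, nbF G Q a ⊆ nbF G Q a' ∨ nbF G Q a' ⊆ nbF G Q a := by
  intro a ha a' ha'
  by_contra hc
  push_neg at hc
  obtain ⟨b, hb, hb'⟩ := Finset.not_subset.mp hc.1
  obtain ⟨b2, hb2, hb2'⟩ := Finset.not_subset.mp hc.2
  rw [mem_nbF] at hb hb2
  rw [mem_nbF] at hb' hb2'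
  push_neg at hb' hb2'
  have hbQ := hb.1
  have hb2Q := hb2.1
  have hadj1 : G.Adj a b := hb.2
  have hadj2 : G.Adj a' b2 := hb2.2
  have hnadj1 : ¬ G.Adj a' b := hb' hbQ
  have hnadj2 : ¬ G.Adj a b2 := hb2' hb2Q
  have haa' : a ≠ a' := by rintro rfl; exact hnadj1 hadj1
  have hbb2 : b ≠ b2 := by rintro rfl; exact hnadj2 hadj1
  exact no_c4 hG hadj1 (hQ b hbQ b2 hb2Q hbb2) hadj2.symm (hP a' ha' a ha haa'.symm)
    hnadj2 (fun h => hnadj1 h.symm) (fun h => hPQ b2 hb2Q (h ▸ ha)) (fun h => hPQ b hbQ (h.symm ▸ ha'))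

lemma threshold {G : SimpleGraph V} (hG : Chordal G) {P Q : Finset V} {M : ℕ}
    (hP : Cliq G P) (hQ : Cliq G Q) (hPQ : ∀ v ∈ Q, v ∉ P)
    (hM : ∀ a, rF G Q a < M) :
    ∀ a ∈ P, ∀ b ∈ Q, (G.Adj a b ↔ tF G P Q M b ≤ rF G Q a) := by
  classical
  intro a ha b hbQ
  constructor
  · intro hadj
    rw [tF]
    split_ifs with hne
    · apply Finset.min'_le
      exact Finset.mem_image_of_mem _ (Finset.mem_filter.mpr ⟨ha, hadj⟩)
    · exact absurd ⟨a, Finset.mem_filter.mpr ⟨ha, hadj⟩⟩ hne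
  · intro hle
    rw [tF] at hle
    split_ifs at hle with hne
    swap
    · exact absurd hle (by have := hM a; omega)
    obtain ⟨a0, ha0mem, ha0⟩ := Finset.mem_image.mp (Finset.min'_mem _ (hne.image (rF G Q)))
    obtain ⟨ha0P, ha0adj⟩ := Finset.mem_filter.mp ha0mem
    rw [← ha0] at hle
    -- hle : rF G Q a0 ≤ rF G Q a
    have hbnb : b ∈ nbF G Q a0 := mem_nbF.mpr ⟨hbQ, ha0adj⟩
    rcases chain hG hP hQ hPQ a0 ha0P a ha with hsub | hsub
    · exact (mem_nbF.mp (hsub hbnb)).2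
    · have : nbF G Q a = nbF G Q a0 :=
        Finset.eq_of_subset_of_card_le hsub hle
      exact (mem_nbF.mp (this ▸ hbnb)).2

lemma tF_ge_one {G : SimpleGraph V} {P Q : Finset V} {M : ℕ} (hM : 1 ≤ M) (b : V)
    (hbQ : b ∈ Q) : 1 ≤ tF G P Q M b := by
  classical
  rw [tF]
  split_ifs with h
  · obtain ⟨a0, ha0mem, ha0⟩ := Finset.mem_image.mp (Finset.min'_mem _ (h.image (rF G Q)))
    obtain ⟨_, ha0adj⟩ := Finset.mem_filter.mp ha0mem
    rw [← ha0]
    have : b ∈ nbF G Q a0 := mem_nbF.mpr ⟨hbQ, ha0adj⟩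
    have := Finset.card_pos.mpr ⟨b, this⟩
    exact this
  · exact hM

lemma tF_le_M {G : SimpleGraph V} {P Q : Finset V} {M : ℕ}
    (hM : ∀ a, rF G Q a < M) (b : V) : tF G P Q M b ≤ M := by
  classical
  rw [tF]
  split_ifs with h
  · obtain ⟨a0, ha0mem, ha0⟩ := Finset.mem_image.mp (Finset.min'_mem _ (h.image (rF G Q)))
    rw [← ha0]
    exact le_of_lt (hM a0)
  · exact le_rfl

lemma rF_le {G : SimpleGraph V} {Q : Finset V} (a : V) : rF G Q a ≤ Q.card := by
  classical
  exact Finset.card_le_card (Finset.filter_subset _ _)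


lemma circle_coe_eq (x y : ℝ) :
    ((x : AddCircle (1 : ℝ)) = (y : AddCircle (1 : ℝ))) ↔ ∃ k : ℤ, x - y = k := by
  rw [QuotientAddGroup.eq_iff_sub_mem]
  constructor
  · intro h
    obtain ⟨k, hk⟩ := AddSubgroup.mem_zmultiples_iff.mp h
    exact ⟨k, by simpa using hk.symm⟩
  · rintro ⟨k, hk⟩
    exact AddSubgroup.mem_zmultiples_iff.mpr ⟨k, by simpa using hk.symm⟩

lemma arc_inter_iff {a b c d : ℝ} (hab : a ≤ b) (hcd : c ≤ d)
    (h1 : b - c < 1) (h2 : d - a < 1) :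
    (arcSet a b ∩ arcSet c d).Nonempty ↔ (c ≤ b ∧ a ≤ d) := by
  constructor
  · rintro ⟨z, ⟨t1, ht1, rfl⟩, t2, ht2, heq⟩
    rw [circle_coe_eq] at heq
    obtain ⟨k, hk⟩ := heq
    have hk0 : k = 0 := by
      have hb1 : (k : ℝ) < 1 := by
        rw [← hk]
        have := ht2.2
        have := ht1.1
        linarith
      have hb2 : (-1 : ℝ) < k := by
        rw [← hk]
        have := ht2.1
        have := ht1.2
        linarith
      have h1' : k < 1 := by exact_mod_cast hb1
      have h2' : -1 < k := by exact_mod_cast hb2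
      omega
    rw [hk0] at hk
    have ht12 : t2 = t1 := by
      have : t2 - t1 = 0 := by simpa using hk
      linarith
    subst ht12
    exact ⟨by linarith [ht1.1, ht2.2, ht2.1, ht1.2], by linarith [ht1.1, ht2.2]⟩
  · rintro ⟨h3, h4⟩
    refine ⟨((max a c : ℝ) : AddCircle (1 : ℝ)), ⟨max a c, ?_, rfl⟩, ⟨max a c, ?_, rfl⟩⟩
    · exact ⟨le_max_left _ _, max_le hab h3⟩
    · exact ⟨le_max_right _ _, max_le h4 hcd⟩

lemma arcSet_shift (a b : ℝ) : arcSet (a + 1) (b + 1) = arcSet a b := by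
  ext z
  constructor
  · rintro ⟨t, ht, rfl⟩
    refine ⟨t - 1, ⟨by linarith [ht.1], by linarith [ht.2]⟩, ?_⟩
    rw [circle_coe_eq]
    exact ⟨-1, by push_cast; ring⟩
  · rintro ⟨t, ht, rfl⟩
    refine ⟨t + 1, ⟨by linarith [ht.1], by linarith [ht.2]⟩, ?_⟩
    rw [circle_coe_eq]
    exact ⟨1, by push_cast; ring⟩


end CAAux

open CAAux

set_option maxHeartbeats 1000000

/-- Every chordal graph with independence number at most 3 is a
circular-arc graph. -/
theorem chordal_indepLE_three_circularArc [Fintype V] (G : SimpleGraph V)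
    (hG : Chordal G) (hα : IndepNumLE G 3) : IsCircularArcGraph G := by
  classical
  obtain ⟨A, B, C, hAcl, hBcl, hCcl, hcover, hBA, hCA, hCB⟩ := cover3 hG hα
  set M : ℕ := Fintype.card V + 1 with hMdef
  have hM1 : 1 ≤ M := by omega
  have hrlt : ∀ (Q : Finset V) (a : V), rF G Q a < M := by
    intro Q a
    have h1 : rF G Q a ≤ Q.card := rF_le a
    have h2 : Q.card ≤ Fintype.card V := by
      simpa using Finset.card_le_card (Finset.subset_univ Q)
    omega
  set δ : ℝ := 1 / (100 * (M : ℝ)) with hδdef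
  have hMR : (1:ℝ) ≤ (M:ℝ) := by exact_mod_cast hM1
  have hδpos : 0 < δ := by
    rw [hδdef]; positivity
  have hMδ : (M:ℝ) * δ = 1/100 := by
    rw [hδdef]
    field_simp
  have bnd : ∀ n : ℕ, n ≤ 2 * M → 0 ≤ (n:ℝ) * δ ∧ (n:ℝ) * δ ≤ 1/50 := by
    intro n hn
    have hcast : (n:ℝ) ≤ 2 * (M:ℝ) := by exact_mod_cast hn
    constructor
    · positivity
    · calc (n:ℝ) * δ ≤ 2 * (M:ℝ) * δ := by
            exact mul_le_mul_of_nonneg_right hcast hδpos.le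
        _ = 2 * ((M:ℝ) * δ) := by ring
        _ = 1/50 := by rw [hMδ]; norm_num
  have bndT : ∀ t : ℕ, 1 ≤ t → t ≤ M → 0 < (2*(t:ℝ) - 1) * δ ∧ (2*(t:ℝ) - 1) * δ ≤ 1/50 := by
    intro t h1 h2
    have ht1 : (1:ℝ) ≤ (t:ℝ) := by exact_mod_cast h1
    constructor
    · apply mul_pos _ hδpos; linarith
    · have := (bnd (2*t) (by omega)).2
      have hcast : ((2*t : ℕ):ℝ) = 2*(t:ℝ) := by push_cast; ring
      rw [hcast] at this
      nlinarith [hδpos.le]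
  have bndR : ∀ r : ℕ, r < M → 0 ≤ 2*(r:ℝ) * δ ∧ 2*(r:ℝ) * δ ≤ 1/50 := by
    intro r h1
    have := bnd (2*r) (by omega)
    have hcast : ((2*r : ℕ):ℝ) = 2*(r:ℝ) := by push_cast; ring
    rw [hcast] at this
    exact this
  have cmp : ∀ t r : ℕ, ((2*(t:ℝ) - 1) * δ ≤ 2*(r:ℝ) * δ) ↔ t ≤ r := by
    intro t r
    rw [mul_le_mul_iff_left₀ hδpos]
    constructor
    · intro h
      by_contra hc
      push_neg at hc
      have : (r:ℝ) + 1 ≤ (t:ℝ) := by exact_mod_cast hc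
      linarith
    · intro h
      have : (t:ℝ) ≤ (r:ℝ) := by exact_mod_cast h
      linarith
  clear_value δ
  have hadjAB : ∀ a ∈ A, ∀ b ∈ B, (G.Adj a b ↔ tF G A B M b ≤ rF G B a) :=
    threshold hG hAcl hBcl hBA (hrlt B)
  have hadjBC : ∀ b ∈ B, ∀ c ∈ C, (G.Adj b c ↔ tF G B C M c ≤ rF G C b) :=
    threshold hG hBcl hCcl hCB (hrlt C)
  have hadjCA : ∀ c ∈ C, ∀ a ∈ A, (G.Adj c a ↔ tF G C A M a ≤ rF G A c) :=
    threshold hG hCcl hAcl (fun v hv hc => hCA v hc hv) (hrlt A)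
  set s : V → ℝ := fun v =>
    if v ∈ A then -1/6 + (2 * (tF G C A M v : ℝ) - 1) * δ
    else if v ∈ B then 1/6 + (2 * (tF G A B M v : ℝ) - 1) * δ
    else 1/2 + (2 * (tF G B C M v : ℝ) - 1) * δ with hsdef
  set e : V → ℝ := fun v =>
    if v ∈ A then 1/6 + 2 * (rF G B v : ℝ) * δ
    else if v ∈ B then 1/2 + 2 * (rF G C v : ℝ) * δ
    else 5/6 + 2 * (rF G A v : ℝ) * δ with hedef
  have hsA : ∀ w ∈ A, s w = -1/6 + (2 * (tF G C A M w : ℝ) - 1) * δ := by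
    intro w hw; simp only [hsdef]; rw [if_pos hw]
  have heA : ∀ w ∈ A, e w = 1/6 + 2 * (rF G B w : ℝ) * δ := by
    intro w hw; simp only [hedef]; rw [if_pos hw]
  have hsB : ∀ w ∈ B, s w = 1/6 + (2 * (tF G A B M w : ℝ) - 1) * δ := by
    intro w hw; simp only [hsdef]; rw [if_neg (hBA w hw), if_pos hw]
  have heB : ∀ w ∈ B, e w = 1/2 + 2 * (rF G C w : ℝ) * δ := by
    intro w hw; simp only [hedef]; rw [if_neg (hBA w hw), if_pos hw]
  have hsC : ∀ w ∈ C, s w = 1/2 + (2 * (tF G B C M w : ℝ) - 1) * δ := by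
    intro w hw; simp only [hsdef]; rw [if_neg (hCA w hw), if_neg (hCB w hw)]
  have heC : ∀ w ∈ C, e w = 5/6 + 2 * (rF G A w : ℝ) * δ := by
    intro w hw; simp only [hedef]; rw [if_neg (hCA w hw), if_neg (hCB w hw)]
  -- bounds per class
  have hbA : ∀ w ∈ A, -1/6 < s w ∧ s w ≤ -1/6 + 1/50 ∧ 1/6 ≤ e w ∧ e w ≤ 1/6 + 1/50 := by
    intro w hw
    have h1 := bndT (tF G C A M w) (tF_ge_one hM1 w hw) (tF_le_M (hrlt A) w)
    have h2 := bndR (rF G B w) (hrlt B w)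
    rw [hsA w hw, heA w hw]
    refine ⟨by linarith [h1.1], by linarith [h1.2], by linarith [h2.1], by linarith [h2.2]⟩
  have hbB : ∀ w ∈ B, 1/6 < s w ∧ s w ≤ 1/6 + 1/50 ∧ 1/2 ≤ e w ∧ e w ≤ 1/2 + 1/50 := by
    intro w hw
    have h1 := bndT (tF G A B M w) (tF_ge_one hM1 w hw) (tF_le_M (hrlt B) w)
    have h2 := bndR (rF G C w) (hrlt C w)
    rw [hsB w hw, heB w hw]
    refine ⟨by linarith [h1.1], by linarith [h1.2], by linarith [h2.1], by linarith [h2.2]⟩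
  have hbC : ∀ w ∈ C, 1/2 < s w ∧ s w ≤ 1/2 + 1/50 ∧ 5/6 ≤ e w ∧ e w ≤ 5/6 + 1/50 := by
    intro w hw
    have h1 := bndT (tF G B C M w) (tF_ge_one hM1 w hw) (tF_le_M (hrlt C) w)
    have h2 := bndR (rF G A w) (hrlt A w)
    rw [hsC w hw, heC w hw]
    refine ⟨by linarith [h1.1], by linarith [h1.2], by linarith [h2.1], by linarith [h2.2]⟩
  -- the six canonical cases
  have caseAA : ∀ u v, u ≠ v → u ∈ A → v ∈ A →
      (G.Adj u v ↔ (arcSet (s u) (e u) ∩ arcSet (s v) (e v)).Nonempty) := by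
    intro u v huv hu hv
    obtain ⟨a1, a2, a3, a4⟩ := hbA u hu
    obtain ⟨b1, b2, b3, b4⟩ := hbA v hv
    rw [arc_inter_iff (by linarith) (by linarith) (by linarith) (by linarith)]
    exact iff_of_true (hAcl u hu v hv huv) ⟨by linarith, by linarith⟩
  have caseBB : ∀ u v, u ≠ v → u ∈ B → v ∈ B →
      (G.Adj u v ↔ (arcSet (s u) (e u) ∩ arcSet (s v) (e v)).Nonempty) := by
    intro u v huv hu hv
    obtain ⟨a1, a2, a3, a4⟩ := hbB u hu
    obtain ⟨b1, b2, b3, b4⟩ := hbB v hv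
    rw [arc_inter_iff (by linarith) (by linarith) (by linarith) (by linarith)]
    exact iff_of_true (hBcl u hu v hv huv) ⟨by linarith, by linarith⟩
  have caseCC : ∀ u v, u ≠ v → u ∈ C → v ∈ C →
      (G.Adj u v ↔ (arcSet (s u) (e u) ∩ arcSet (s v) (e v)).Nonempty) := by
    intro u v huv hu hv
    obtain ⟨a1, a2, a3, a4⟩ := hbC u hu
    obtain ⟨b1, b2, b3, b4⟩ := hbC v hv
    rw [arc_inter_iff (by linarith) (by linarith) (by linarith) (by linarith)]
    exact iff_of_true (hCcl u hu v hv huv) ⟨by linarith, by linarith⟩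
  have caseAB : ∀ u v, u ∈ A → v ∈ B →
      (G.Adj u v ↔ (arcSet (s u) (e u) ∩ arcSet (s v) (e v)).Nonempty) := by
    intro u v hu hv
    obtain ⟨a1, a2, a3, a4⟩ := hbA u hu
    obtain ⟨b1, b2, b3, b4⟩ := hbB v hv
    rw [arc_inter_iff (by linarith) (by linarith) (by linarith) (by linarith)]
    rw [hadjAB u hu v hv]
    constructor
    · intro h
      have := (cmp (tF G A B M v) (rF G B u)).mpr h
      rw [hsB v hv, heA u hu]
      exact ⟨by linarith, by linarith⟩
    · rintro ⟨h1, h2⟩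
      rw [hsB v hv, heA u hu] at h1
      exact (cmp (tF G A B M v) (rF G B u)).mp (by linarith)
  have caseBC : ∀ u v, u ∈ B → v ∈ C →
      (G.Adj u v ↔ (arcSet (s u) (e u) ∩ arcSet (s v) (e v)).Nonempty) := by
    intro u v hu hv
    obtain ⟨a1, a2, a3, a4⟩ := hbB u hu
    obtain ⟨b1, b2, b3, b4⟩ := hbC v hv
    rw [arc_inter_iff (by linarith) (by linarith) (by linarith) (by linarith)]
    rw [hadjBC u hu v hv]
    constructor
    · intro h
      have := (cmp (tF G B C M v) (rF G C u)).mpr h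
      rw [hsC v hv, heB u hu]
      exact ⟨by linarith, by linarith⟩
    · rintro ⟨h1, h2⟩
      rw [hsC v hv, heB u hu] at h1
      exact (cmp (tF G B C M v) (rF G C u)).mp (by linarith)
  have caseAC : ∀ u v, u ∈ A → v ∈ C →
      (G.Adj u v ↔ (arcSet (s u) (e u) ∩ arcSet (s v) (e v)).Nonempty) := by
    intro u v hu hv
    obtain ⟨a1, a2, a3, a4⟩ := hbA u hu
    obtain ⟨b1, b2, b3, b4⟩ := hbC v hv
    rw [← arcSet_shift (s u) (e u)]
    rw [arc_inter_iff (by linarith) (by linarith) (by linarith) (by linarith)]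
    rw [G.adj_comm, hadjCA v hv u hu]
    constructor
    · intro h
      have := (cmp (tF G C A M u) (rF G A v)).mpr h
      rw [hsA u hu, heC v hv]
      exact ⟨by linarith, by linarith⟩
    · rintro ⟨h1, h2⟩
      rw [hsA u hu, heC v hv] at h2
      exact (cmp (tF G C A M u) (rF G A v)).mp (by linarith)
  refine ⟨s, e, ?_⟩
  intro u v huv
  have flip : ∀ u' v', (G.Adj v' u' ↔ (arcSet (s v') (e v') ∩ arcSet (s u') (e u')).Nonempty) →
      (G.Adj u' v' ↔ (arcSet (s u') (e u') ∩ arcSet (s v') (e v')).Nonempty) := by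
    intro u' v' h
    rw [G.adj_comm, h, Set.inter_comm]
  rcases hcover u with hu | hu | hu <;> rcases hcover v with hv | hv | hv
  · exact caseAA u v huv hu hv
  · exact caseAB u v hu hv
  · exact caseAC u v hu hv
  · exact flip u v (caseAB v u hv hu)
  · exact caseBB u v huv hu hv
  · exact caseBC u v hu hv
  · exact flip u v (caseAC v u hv hu)
  · exact flip u v (caseBC v u hv hu)
  · exact caseCC u v huv hu hv
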